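/- Weak color-avoiding connectivity is not transitive: there exists a vertex-colored connected graph and vertices u, v, w such that u and v are weakly color-avoiding connected, v and w are weakly color-avoiding connected, but u and w are not weakly color-avoiding connected. -/

import Mathlib

/-- `u` and `v` are weakly `i`-avoiding connected. -/
def WeaklyAvoids {V C : Type} (G : SimpleGraph V) (c : V → C) (i : C) (u v : V) : Prop :=
  c u = i ∨ c v = i ∨ ∃ p : G.Walk u v, ∀ x ∈ p.support, c x ≠ i

private def Gex : SimpleGraph (Fin 3) where
  Adj a b := a.val + 1 = b.val ∨ b.val + 1 = a.val
  symm := ⟨by intro a b h; tauto⟩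
  loopless := ⟨by intro a h; omega⟩

private instance : DecidableRel Gex.Adj := fun a b =>
  inferInstanceAs (Decidable (a.val + 1 = b.val ∨ b.val + 1 = a.val))

private lemma Gex_mid (p : Gex.Walk 0 2) : (1 : Fin 3) ∈ p.support := by
  cases p with
  | cons h q =>
    rename_i b
    have hb : b = 1 := by
      fin_cases b <;> first | rfl | (exfalso; revert h; decide)
    subst hb
    simp

/-- Weak color-avoiding connectivity is not transitive. -/
theorem weak_not_transitive :
    ∃ (V : Type) (G : SimpleGraph V) (C : Type) (c : V → C) (u v w : V),
      G.Connected ∧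
      (∀ i : C, WeaklyAvoids G c i u v) ∧
      (∀ i : C, WeaklyAvoids G c i v w) ∧
      ¬ (∀ i : C, WeaklyAvoids G c i u w) := by
  refine ⟨Fin 3, Gex, Fin 2, ![0, 1, 0], 0, 1, 2, ?_, ?_, ?_, ?_⟩
  · constructor
    intro a b
    have h01 : Gex.Adj 0 1 := by decide
    have h12 : Gex.Adj 1 2 := by decide
    fin_cases a <;> fin_cases b
    · rfl
    · exact h01.reachable
    · exact (h01.reachable).trans h12.reachable
    · exact h01.symm.reachable
    · rfl
    · exact h12.reachable
    · exact (h12.symm.reachable).trans h01.symm.reachable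
    · exact h12.symm.reachable
    · rfl
  · intro i
    fin_cases i
    · exact Or.inl rfl
    · exact Or.inr (Or.inl rfl)
  · intro i
    fin_cases i
    · exact Or.inr (Or.inl rfl)
    · exact Or.inl rfl
  · intro h
    rcases h 1 with h1 | h1 | ⟨p, hp⟩
    · exact absurd h1 (by decide)
    · exact absurd h1 (by decide)
    · exact hp 1 (Gex_mid p) rfl
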